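/- Let λ > λ*, where λ* = (√2+1)·e^{√2}. Then ζ_λ has exactly one nonzero real fixed point, and this fixed point lies in the open interval (√2, ∞). -/

import Mathlib

/-- The real function `ζ_λ(x) = λ·x·e^{−x}/(x+1)`. -/
noncomputable def zeta (lam x : ℝ) : ℝ := lam * x * Real.exp (-x) / (x + 1)

noncomputable def gaux (x : ℝ) : ℝ := (x + 1) * Real.exp x

lemma gaux_hasDerivAt (x : ℝ) : HasDerivAt gaux ((x + 2) * Real.exp x) x := by
  have h : HasDerivAt gaux (1 * Real.exp x + (id x + 1) * Real.exp x) x := ((hasDerivAt_id x).add_const 1).mul (Real.hasDerivAt_exp x)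
  convert h using 1
  simp [Real.exp_ne_zero]
  ring

lemma gaux_mono : StrictMonoOn gaux (Set.Ici (-1 : ℝ)) := by
  apply strictMonoOn_of_deriv_pos (convex_Ici _)
  · exact ((continuous_id.add continuous_const).mul Real.continuous_exp).continuousOn
  · intro x hx
    rw [interior_Ici] at hx
    rw [(gaux_hasDerivAt x).deriv]
    have : (0:ℝ) < x + 2 := by linarith [Set.mem_Ioi.mp hx]
    positivity

theorem unique_nonzero_fixed_point_of_lamStar_lt (lam : ℝ)
    (hlam : (Real.sqrt 2 + 1) * Real.exp (Real.sqrt 2) < lam) :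
    ∃ b : ℝ, b ∈ Set.Ioi (Real.sqrt 2) ∧ zeta lam b = b ∧
      ∀ x : ℝ, x ≠ 0 → x ≠ -1 → zeta lam x = x → x = b := by
  have hs2 : (0:ℝ) < Real.sqrt 2 := Real.sqrt_pos.mpr (by norm_num)
  have he : (1:ℝ) ≤ Real.exp (Real.sqrt 2) := Real.one_le_exp hs2.le
  have hlam_pos : 0 < lam := lt_trans (by nlinarith) hlam
  have hg2 : gaux (Real.sqrt 2) < lam := by
    simpa [gaux] using hlam
  have hlam_big : Real.sqrt 2 ≤ lam := by nlinarith
  have hgl : lam ≤ gaux lam := by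
    have : (1:ℝ) ≤ Real.exp lam := Real.one_le_exp hlam_pos.le
    have : gaux lam = (lam + 1) * Real.exp lam := rfl
    nlinarith [Real.one_le_exp hlam_pos.le]
  have hcont : ContinuousOn gaux (Set.Icc (Real.sqrt 2) lam) := by
    exact ((continuous_id.add continuous_const).mul Real.continuous_exp).continuousOn
  obtain ⟨b, hbmem, hgb⟩ := intermediate_value_Ioc hlam_big hcont
    (Set.mem_Ioc.mpr ⟨hg2, hgl⟩)
  have hb2 : Real.sqrt 2 < b := hbmem.1
  have hb1 : (-1:ℝ) < b := by linarith
  have hb1' : b + 1 ≠ 0 := by linarith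
  refine ⟨b, hb2, ?_, ?_⟩
  · -- zeta lam b = b
    have : lam = (b + 1) * Real.exp b := hgb.symm
    rw [zeta, this, Real.exp_neg]
    field_simp [Real.exp_ne_zero]
  · intro x hx0 hx1 hfix
    have hx1' : x + 1 ≠ 0 := fun h => hx1 (by linarith)
    rw [zeta, div_eq_iff hx1'] at hfix
    have hcancel : lam * Real.exp (-x) = x + 1 := by
      have := mul_left_cancel₀ hx0 (show x * (lam * Real.exp (-x)) = x * (x + 1) by
        ring_nf; ring_nf at hfix; linarith)
      exact this
    have hxpos : 0 < x + 1 := by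
      rw [← hcancel]; positivity
    have hgx : gaux x = lam := by
      have : lam = (x + 1) * Real.exp x := by
        rw [← hcancel, Real.exp_neg]
        field_simp
      simp [gaux, this]
    have hxmem : x ∈ Set.Ici (-1:ℝ) := by
      simp only [Set.mem_Ici]; linarith
    have hbmem' : b ∈ Set.Ici (-1:ℝ) := Set.mem_Ici.mpr hb1.le
    exact gaux_mono.injOn hxmem hbmem' (by rw [hgx, hgb])
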